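/- Let T > 0, let f : ℝ → ℝ be a continuous T-periodic function, and let α ∈ (0,1). Then the function t ↦ I^α f(t) is bounded on (0,∞) if and only if ∫₀ᵀ f(t) dt = 0. -/

import Mathlib

open MeasureTheory intervalIntegral Set

lemma periodic_bound' {f : ℝ → ℝ} {T : ℝ} (hT : 0 < T) (hf : Continuous f)
    (hper : Function.Periodic f T) : ∃ C : ℝ, 0 ≤ C ∧ ∀ x, |f x| ≤ C := by
  obtain ⟨C, hC⟩ := (isCompact_Icc (a := (0:ℝ)) (b := T)).exists_bound_of_continuousOn
    hf.continuousOn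
  refine ⟨max C 0, le_max_right _ _, fun x => ?_⟩
  obtain ⟨y, hy, hxy⟩ := hper.exists_mem_Ico₀ hT x
  rw [hxy, ← Real.norm_eq_abs]
  exact le_trans (hC y (Ico_subset_Icc_self hy)) (le_max_left _ _)

lemma ker_intable {f : ℝ → ℝ} (hf : Continuous f) {α : ℝ} (hα0 : 0 < α) (t a b : ℝ) :
    IntervalIntegrable (fun s => (t - s) ^ (α - 1) * f s) volume a b := by
  have h1 : IntervalIntegrable (fun s => (t - s) ^ (α - 1)) volume a b := by
    have := intervalIntegrable_rpow' (a := t - a) (b := t - b) (r := α - 1) (by linarith)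
    have h2 := this.comp_sub_left t
    simpa using h2
  exact h1.mul_continuousOn hf.continuousOn

lemma ker_integral {α : ℝ} (hα0 : 0 < α) {a t : ℝ} :
    ∫ s in a..t, (t - s) ^ (α - 1) = ((t - a) ^ α - 0 ^ α) / α := by
  have h := integral_comp_sub_left (a := a) (b := t) (fun x => x ^ (α - 1)) t
  rw [h, sub_self]
  rw [integral_rpow (Or.inl (by linarith))]
  ring_nf

lemma ker_integral' {α : ℝ} (hα0 : 0 < α) {a t : ℝ} :
    ∫ s in a..t, (t - s) ^ (α - 1) = (t - a) ^ α / α := by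
  rw [ker_integral hα0, Real.zero_rpow hα0.ne', sub_zero]

lemma near_bound {f : ℝ → ℝ} (hf : Continuous f) {Cf : ℝ} (hCf : ∀ x, |f x| ≤ Cf)
    {α : ℝ} (hα0 : 0 < α) {a t : ℝ} (hat : a ≤ t) :
    |∫ s in a..t, (t - s) ^ (α - 1) * f s| ≤ Cf * ((t - a) ^ α / α) := by
  have hint := ker_intable hf hα0 t a t
  have hint2 : IntervalIntegrable (fun s => (t - s) ^ (α - 1) * Cf) volume a t :=
    ker_intable continuous_const hα0 t a t
  calc |∫ s in a..t, (t - s) ^ (α - 1) * f s|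
      ≤ ∫ s in a..t, |(t - s) ^ (α - 1) * f s| := by
        rw [← Real.norm_eq_abs]
        exact (intervalIntegral.norm_integral_le_integral_norm hat).trans (le_of_eq rfl)
    _ ≤ ∫ s in a..t, (t - s) ^ (α - 1) * Cf := by
        apply intervalIntegral.integral_mono_on hat hint.abs hint2
        intro x hx
        rw [abs_mul, abs_of_nonneg (Real.rpow_nonneg (by linarith [hx.2]) _)]
        exact mul_le_mul_of_nonneg_left (hCf x) (Real.rpow_nonneg (by linarith [hx.2]) _)
    _ = (∫ s in a..t, (t - s) ^ (α - 1)) * Cf := intervalIntegral.integral_mul_const _ _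
    _ = Cf * ((t - a) ^ α / α) := by rw [ker_integral' hα0]; ring

lemma key_bound (T : ℝ) (hT : 0 < T) (f : ℝ → ℝ) (hf : Continuous f)
    (hper : Function.Periodic f T) (hmean : (∫ t in (0:ℝ)..T, f t) = 0)
    {α : ℝ} (hα0 : 0 < α) (hα1 : α < 1) :
    ∃ M : ℝ, ∀ t ∈ Ioi (0:ℝ), |∫ s in (0:ℝ)..t, (t - s) ^ (α - 1) * f s| ≤ M := by
  obtain ⟨Cf, hCf0, hCf⟩ := periodic_bound' hT hf hper
  set F : ℝ → ℝ := fun s => ∫ x in (0:ℝ)..s, f x with hFdef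
  have hFc : Continuous F :=
    intervalIntegral.continuous_primitive (fun a b => hf.intervalIntegrable a b) 0
  have hFper : Function.Periodic F T := by
    intro s
    have h1 : F s + (∫ x in s..(s+T), f x) = F (s + T) :=
      intervalIntegral.integral_add_adjacent_intervals (hf.intervalIntegrable _ _)
        (hf.intervalIntegrable _ _)
    have h2 := hper.intervalIntegral_add_eq s 0
    rw [zero_add] at h2
    simp only [hFdef] at h1 ⊢
    rw [← h1, h2, hmean, add_zero]
  obtain ⟨CF, hCF0, hCF⟩ := periodic_bound' hT hFc hFper
  have hTα : (0:ℝ) ≤ T ^ (α - 1) := Real.rpow_nonneg hT.le _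
  have hTα' : (0:ℝ) ≤ T ^ α := Real.rpow_nonneg hT.le _
  refine ⟨Cf * (T ^ α / α) + 2 * (CF * T ^ (α - 1)), fun t ht => ?_⟩
  simp only [mem_Ioi] at ht
  by_cases htT : t ≤ T
  · have h1 := near_bound hf hCf hα0 (le_of_lt ht)
    rw [sub_zero] at h1
    have h2 : t ^ α ≤ T ^ α := Real.rpow_le_rpow ht.le htT hα0.le
    have : Cf * (t ^ α / α) ≤ Cf * (T ^ α / α) :=
      mul_le_mul_of_nonneg_left (by gcongr) hCf0
    nlinarith [mul_nonneg hCF0 hTα]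
  · push_neg at htT
    set b := t - T with hb
    have hb0 : 0 < b := by simp only [hb]; linarith
    have htb : t - b = T := by simp only [hb]; ring
    -- split the integral
    have hsplit : (∫ s in (0:ℝ)..t, (t - s) ^ (α - 1) * f s)
        = (∫ s in (0:ℝ)..b, (t - s) ^ (α - 1) * f s)
          + ∫ s in b..t, (t - s) ^ (α - 1) * f s :=
      (intervalIntegral.integral_add_adjacent_intervals (ker_intable hf hα0 t 0 b)
        (ker_intable hf hα0 t b t)).symm
    -- near part
    have hnear : |∫ s in b..t, (t - s) ^ (α - 1) * f s| ≤ Cf * (T ^ α / α) := by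
      have := near_bound hf hCf hα0 (show b ≤ t by linarith)
      rwa [htb] at this
    -- far part: integration by parts
    have hpos : ∀ x ∈ Icc (0:ℝ) b, (0:ℝ) < t - x := fun x hx => by
      have := hx.2; simp only [hb] at this ⊢; linarith
    have huderiv : ∀ x ∈ uIcc (0:ℝ) b,
        HasDerivAt (fun s => (t - s) ^ (α - 1)) (-((α-1) * (t - x) ^ (α - 2))) x := by
      intro x hx
      rw [uIcc_of_le hb0.le] at hx
      have hne : t - x ≠ 0 := ne_of_gt (hpos x hx)
      have h1 : HasDerivAt (fun s : ℝ => t - s) (-1) x := (hasDerivAt_id x).const_sub t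
      have h2 := (Real.hasDerivAt_rpow_const (p := α - 1) (Or.inl hne)).comp x h1
      have h3 : α - 1 - 1 = α - 2 := by ring
      simp only [Function.comp_def, h3] at h2
      exact h2.congr_deriv (by ring)
    have hvderiv : ∀ x ∈ uIcc (0:ℝ) b, HasDerivAt F (f x) x := fun x _ =>
      intervalIntegral.integral_hasDerivAt_right (hf.intervalIntegrable 0 x)
        (hf.stronglyMeasurableAtFilter _ _) hf.continuousAt
    have hu'cont : ContinuousOn (fun x => -((α-1) * (t - x) ^ (α - 2))) (uIcc (0:ℝ) b) := by
      rw [uIcc_of_le hb0.le]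
      exact (continuousOn_const.mul (((continuous_const.sub continuous_id).continuousOn).rpow_const
        (fun x hx => Or.inl (ne_of_gt (hpos x hx))))).neg
    have hu'int : IntervalIntegrable (fun x => -((α-1) * (t - x) ^ (α - 2))) volume 0 b :=
      hu'cont.intervalIntegrable
    have hibp := intervalIntegral.integral_mul_deriv_eq_deriv_mul huderiv hvderiv hu'int
      (hf.intervalIntegrable 0 b)
    have hF0 : F 0 = 0 := intervalIntegral.integral_same
    rw [hF0, mul_zero, sub_zero, htb] at hibp
    -- bound the u' * F integral
    have hbnd2 : |∫ x in (0:ℝ)..b, -((α-1) * (t - x) ^ (α - 2)) * F x| ≤ CF * T ^ (α - 1) := by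
      have hgint : IntervalIntegrable (fun x => (1-α) * (t - x) ^ (α - 2) * CF) volume 0 b := by
        apply ContinuousOn.intervalIntegrable
        rw [uIcc_of_le hb0.le]
        exact (continuousOn_const.mul (((continuous_const.sub continuous_id).continuousOn).rpow_const
          (fun x hx => Or.inl (ne_of_gt (hpos x hx))))).mul continuousOn_const
      have hmono : (∫ x in (0:ℝ)..b, |(-((α-1) * (t - x) ^ (α - 2))) * F x|)
          ≤ ∫ x in (0:ℝ)..b, (1-α) * (t - x) ^ (α - 2) * CF := by
        apply intervalIntegral.integral_mono_on hb0.le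
          ((hu'int.mul_continuousOn hFc.continuousOn).abs) hgint
        intro x hx
        have hrn : (0:ℝ) ≤ (t - x) ^ (α - 2) := Real.rpow_nonneg (hpos x hx).le _
        rw [abs_mul, abs_neg, abs_mul, abs_of_nonneg hrn, abs_of_neg (by linarith : α - 1 < 0)]
        have : -(α-1) = 1 - α := by ring
        rw [this]
        exact mul_le_mul_of_nonneg_left (hCF x) (by nlinarith)
      have hval : (∫ x in (0:ℝ)..b, (1-α) * (t - x) ^ (α - 2) * CF)
          = (1-α) * ((t ^ (α-1) - T ^ (α-1)) / (α-1)) * CF := by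
        rw [intervalIntegral.integral_mul_const, intervalIntegral.integral_const_mul]
        congr 2
        have h := integral_comp_sub_left (a := (0:ℝ)) (b := b) (fun x => x ^ (α - 2)) t
        rw [h, sub_zero, htb]
        rw [integral_rpow (Or.inr ⟨by intro hc; apply absurd hc; intro h'; nlinarith, by
          rw [uIcc_of_le (by linarith : T ≤ t)]
          intro hc
          exact absurd hc.1 (by linarith)⟩)]
        have he : α - 2 + 1 = α - 1 := by ring
        rw [he]
      have htα : (0:ℝ) ≤ t ^ (α-1) := Real.rpow_nonneg (by linarith) _
      have hne1 : α - 1 ≠ 0 := by intro h; nlinarith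
      have hval2 : (1-α) * ((t ^ (α-1) - T ^ (α-1)) / (α-1)) * CF
          = (T ^ (α-1) - t ^ (α-1)) * CF := by
        field_simp
        ring
      calc |∫ x in (0:ℝ)..b, -((α-1) * (t - x) ^ (α - 2)) * F x|
          ≤ ∫ x in (0:ℝ)..b, |(-((α-1) * (t - x) ^ (α - 2))) * F x| := by
            rw [← Real.norm_eq_abs]
            exact intervalIntegral.norm_integral_le_integral_norm hb0.le
        _ ≤ (1-α) * ((t ^ (α-1) - T ^ (α-1)) / (α-1)) * CF := hmono.trans_eq hval
        _ = (T ^ (α-1) - t ^ (α-1)) * CF := hval2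
        _ ≤ CF * T ^ (α - 1) := by nlinarith
    have hfar : |∫ s in (0:ℝ)..b, (t - s) ^ (α - 1) * f s| ≤ 2 * (CF * T ^ (α - 1)) := by
      rw [hibp]
      have h1 : |T ^ (α-1) * F b| ≤ T ^ (α-1) * CF := by
        rw [abs_mul, abs_of_nonneg hTα]
        exact mul_le_mul_of_nonneg_left (hCF b) hTα
      calc |T ^ (α-1) * F b - ∫ x in (0:ℝ)..b, -((α-1) * (t - x) ^ (α - 2)) * F x|
          ≤ |T ^ (α-1) * F b| + |∫ x in (0:ℝ)..b, -((α-1) * (t - x) ^ (α - 2)) * F x| :=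
            abs_sub _ _
        _ ≤ T ^ (α-1) * CF + CF * T ^ (α-1) := add_le_add h1 hbnd2
        _ = 2 * (CF * T ^ (α - 1)) := by ring
    calc |∫ s in (0:ℝ)..t, (t - s) ^ (α - 1) * f s|
        ≤ |∫ s in (0:ℝ)..b, (t - s) ^ (α - 1) * f s|
          + |∫ s in b..t, (t - s) ^ (α - 1) * f s| := by rw [hsplit]; exact abs_add_le _ _
      _ ≤ 2 * (CF * T ^ (α - 1)) + Cf * (T ^ α / α) := add_le_add hfar hnear
      _ = Cf * (T ^ α / α) + 2 * (CF * T ^ (α - 1)) := by ring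

/-- For a continuous `T`-periodic `f` and `α ∈ (0,1)`, the fractional integral `I^α f`
is bounded on `(0,∞)` if and only if the mean of `f` over a period is zero. -/
theorem rl_integral_bounded_iff_mean_zero (T : ℝ) (hT : 0 < T)
    (f : ℝ → ℝ) (hf : Continuous f) (hper : Function.Periodic f T)
    (α : ℝ) (hα : α ∈ Set.Ioo (0 : ℝ) 1) :
    (∃ M : ℝ, ∀ t ∈ Ioi (0 : ℝ),
        |(1 / Real.Gamma α) * ∫ s in (0 : ℝ)..t, (t - s) ^ (α - 1) * f s| ≤ M) ↔
      (∫ t in (0 : ℝ)..T, f t) = 0 := by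
  obtain ⟨hα0, hα1⟩ := hα
  have hΓ : 0 < Real.Gamma α := Real.Gamma_pos_of_pos hα0
  constructor
  · rintro ⟨M, hM⟩
    set c := (∫ t in (0:ℝ)..T, f t) / T with hc
    set g : ℝ → ℝ := fun x => f x - c with hg
    have hgc : Continuous g := hf.sub continuous_const
    have hgper : Function.Periodic g T := fun x => by simp only [hg, hper x]
    have hgmean : (∫ t in (0:ℝ)..T, g t) = 0 := by
      simp only [hg]
      rw [intervalIntegral.integral_sub (hf.intervalIntegrable _ _) intervalIntegrable_const,
        intervalIntegral.integral_const, smul_eq_mul, sub_zero, hc]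
      field_simp
      ring
    obtain ⟨M₁, hM₁⟩ := key_bound T hT g hgc hgper hgmean hα0 hα1
    have hM₁0 : 0 ≤ M₁ := le_trans (abs_nonneg _) (hM₁ 1 (by norm_num))
    have hM0 : 0 ≤ M := le_trans (abs_nonneg _) (hM 1 (by norm_num))
    have hkey : ∀ t ∈ Ioi (0:ℝ), |c| * (t ^ α / α) ≤ M * Real.Gamma α + M₁ := by
      intro t ht
      simp only [mem_Ioi] at ht
      have h1 := hM t (mem_Ioi.mpr ht)
      have h2 := hM₁ t (mem_Ioi.mpr ht)
      have h1' : |∫ s in (0:ℝ)..t, (t - s) ^ (α - 1) * f s| ≤ M * Real.Gamma α := by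
        rw [abs_mul, abs_of_pos (by positivity : (0:ℝ) < 1 / Real.Gamma α)] at h1
        calc |∫ s in (0:ℝ)..t, (t - s) ^ (α - 1) * f s|
            = (1 / Real.Gamma α * |∫ s in (0:ℝ)..t, (t - s) ^ (α - 1) * f s|) * Real.Gamma α := by
              field_simp
          _ ≤ M * Real.Gamma α := mul_le_mul_of_nonneg_right h1 hΓ.le
      have hdecomp : (∫ s in (0:ℝ)..t, (t - s) ^ (α - 1) * g s)
          = (∫ s in (0:ℝ)..t, (t - s) ^ (α - 1) * f s) - c * (t ^ α / α) := by
        have he : (∫ s in (0:ℝ)..t, (t - s) ^ (α - 1) * g s)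
            = ∫ s in (0:ℝ)..t, ((t - s) ^ (α - 1) * f s - (t - s) ^ (α - 1) * c) := by
          apply intervalIntegral.integral_congr
          intro s _
          simp only [hg]
          ring
        rw [he, intervalIntegral.integral_sub (ker_intable hf hα0 t 0 t)
          (ker_intable continuous_const hα0 t 0 t),
          intervalIntegral.integral_mul_const, ker_integral' hα0, sub_zero]
        ring
      have := abs_sub_abs_le_abs_sub (c * (t ^ α / α))
        (∫ s in (0:ℝ)..t, (t - s) ^ (α - 1) * f s)
      rw [abs_mul] at this
      have h3 : |c * (t ^ α / α) - ∫ s in (0:ℝ)..t, (t - s) ^ (α - 1) * f s|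
          = |∫ s in (0:ℝ)..t, (t - s) ^ (α - 1) * g s| := by
        rw [hdecomp, abs_sub_comm]
      have h4 : |t ^ α / α| = t ^ α / α := abs_of_nonneg (by positivity)
      rw [h4, h3] at this
      linarith
    have hc0 : c = 0 := by
      by_contra hcne
      have hcpos : 0 < |c| := abs_pos.mpr hcne
      set K := M * Real.Gamma α + M₁ with hK
      have hK0 : 0 ≤ K := by positivity
      set x := K * α / |c| + 1 with hx
      have hx0 : 0 < x := by positivity
      set t := x ^ (α⁻¹) with ht
      have ht0 : 0 < t := Real.rpow_pos_of_pos hx0 _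
      have htα : t ^ α = x := Real.rpow_inv_rpow hx0.le hα0.ne'
      have hcon := hkey t (mem_Ioi.mpr ht0)
      rw [htα, hx] at hcon
      have heq : |c| * ((K * α / |c| + 1) / α) = K + |c| / α := by
        field_simp
      rw [heq] at hcon
      have hpos2 : 0 < |c| / α := by positivity
      linarith
    rw [hc, div_eq_zero_iff] at hc0
    rcases hc0 with h | h
    · exact h
    · exact absurd h hT.ne'
  · intro hmean
    obtain ⟨M₁, hM₁⟩ := key_bound T hT f hf hper hmean hα0 hα1
    refine ⟨(1 / Real.Gamma α) * M₁, fun t ht => ?_⟩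
    rw [abs_mul, abs_of_pos (by positivity : (0:ℝ) < 1 / Real.Gamma α)]
    exact mul_le_mul_of_nonneg_left (hM₁ t ht) (by positivity)
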